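/- Let (L_n)_{n≥1} be i.i.d. positive random variables with mean m > 0 and finite variance, T_n = ∑_{i=1}^n L_i, and let g: ℝ → ℝ be measurable with E[g(L)] and Var(g(L)) finite and g ≥ 0. Then almost surely, ∑_{i=1}^n g(L_{i+1})/(T_i log T_i) = (E[g(L)]/m)·log log n + O(1) as n → ∞. -/

import Mathlib

open MeasureTheory ProbabilityTheory Filter Finset
open scoped ENNReal

lemma st19_abs_log_sub {w u v : ℝ} (hw : 0 < w) (hu : w ≤ u) (hv : w ≤ v) :
    |Real.log u - Real.log v| ≤ |u - v| / w := by
  have key : ∀ x y : ℝ, w ≤ x → w ≤ y → x ≤ y → Real.log y - Real.log x ≤ (y - x) / w := by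
    intro x y hx hy hxy
    have hxp : 0 < x := hw.trans_le hx
    have hyp : 0 < y := hw.trans_le hy
    have h1 : Real.log y - Real.log x = Real.log (y / x) := by
      rw [Real.log_div (ne_of_gt hyp) (ne_of_gt hxp)]
    rw [h1]
    have h2 : Real.log (y / x) ≤ y / x - 1 := Real.log_le_sub_one_of_pos (by positivity)
    have h3 : y / x - 1 = (y - x) / x := by field_simp
    have h4 : (y - x) / x ≤ (y - x) / w := div_le_div_of_nonneg_left (by linarith) hw hx
    linarith
  rcases le_total u v with h | h
  · have h1 := key u v hu hv h
    have h2 : Real.log u ≤ Real.log v := Real.log_le_log (hw.trans_le hu) h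
    rw [abs_sub_comm, abs_of_nonneg (by linarith), abs_sub_comm, abs_of_nonneg (by linarith)]
    exact h1
  · have h1 := key v u hv hu h
    have h2 : Real.log v ≤ Real.log u := Real.log_le_log (hw.trans_le hv) h
    rw [abs_of_nonneg (by linarith), abs_of_nonneg (by linarith)]
    exact h1

-- log y - log x >= (y-x)/y for 0 < x <= y
lemma st19_log_sub_ge {x y : ℝ} (hx : 0 < x) (hxy : x ≤ y) :
    (y - x) / y ≤ Real.log y - Real.log x := by
  have hyp : 0 < y := hx.trans_le hxy
  have h1 : Real.log x - Real.log y = Real.log (x / y) := by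
    rw [Real.log_div (ne_of_gt hx) (ne_of_gt hyp)]
  have h2 : Real.log (x / y) ≤ x / y - 1 := Real.log_le_sub_one_of_pos (by positivity)
  have h3 : x / y - 1 = -((y - x) / y) := by field_simp; ring
  linarith


lemma st19_tail (u : ℕ → ℝ) (h : ∃ N C, ∀ n, N ≤ n → |u n| ≤ C) :
    ∃ C, ∀ n, 2 ≤ n → |u n| ≤ C := by
  obtain ⟨N, C, h⟩ := h
  have hC : 0 ≤ C := le_trans (abs_nonneg _) (h N le_rfl)
  refine ⟨C + ∑ k ∈ range (N + 1), |u k|, fun n _ => ?_⟩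
  have hsum : 0 ≤ ∑ k ∈ range (N + 1), |u k| :=
    Finset.sum_nonneg fun k _ => abs_nonneg _
  rcases le_or_gt N n with hn | hn
  · linarith [h n hn]
  · have : |u n| ≤ ∑ k ∈ range (N + 1), |u k| :=
      Finset.single_le_sum (fun k _ => abs_nonneg (u k)) (mem_range.2 (by omega))
    linarith

lemma st19_telescope (f : ℕ → ℝ) (N : ℕ) :
    ∀ n, N ≤ n → ∑ i ∈ Icc (N + 1) n, (f (i + 1) - f i) = f (n + 1) - f (N + 1) := by
  intro n hn
  induction n, hn using Nat.le_induction with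
  | base => simp
  | succ n hn ih =>
      rw [Finset.sum_Icc_succ_top (by omega), ih]; ring

lemma st19_abel (F b : ℕ → ℝ) (N : ℕ) (hN : 1 ≤ N) :
    ∀ n, N ≤ n → ∑ i ∈ Icc N n, (F i - F (i - 1)) * b i =
      F n * b n - F (N - 1) * b N + ∑ i ∈ Icc N (n - 1), F i * (b i - b (i + 1)) := by
  intro n hn
  induction n, hn using Nat.le_induction with
  | base =>
      rw [Finset.Icc_self, Finset.sum_singleton, Finset.Icc_eq_empty (by omega), Finset.sum_empty]
      ring
  | succ n hn ih =>
      rw [Finset.sum_Icc_succ_top (by omega : N ≤ n + 1), ih]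
      have h1 : n + 1 - 1 = n := by omega
      have h2 : n - 1 + 1 = n := by omega
      rw [h1, ← h2, Finset.sum_Icc_succ_top (by omega : N ≤ n - 1 + 1), h2]
      ring

lemma st19_log_le (x : ℝ) (hx : 1 ≤ x) : Real.log x ≤ 12 * x ^ ((1:ℝ)/12) := by
  have hxp : 0 < x := by linarith
  have h1 : Real.log (x ^ ((1:ℝ)/12)) = (1/12) * Real.log x := Real.log_rpow hxp _
  have h2 : Real.log (x ^ ((1:ℝ)/12)) ≤ x ^ ((1:ℝ)/12) - 1 :=
    Real.log_le_sub_one_of_pos (Real.rpow_pos_of_pos hxp _)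
  nlinarith [Real.rpow_pos_of_pos hxp ((1:ℝ)/12)]

-- sum over Icc N n = f N + sum over Icc (N+1) n
lemma st19_sum_Icc_bot (f : ℕ → ℝ) {N n : ℕ} (h : N ≤ n) :
    ∑ i ∈ Icc N n, f i = f N + ∑ i ∈ Icc (N + 1) n, f i := by
  rw [← Finset.Ioc_insert_left h, Finset.sum_insert (by simp), Finset.Icc_add_one_left_eq_Ioc]

-- split: sum over Icc 1 n = sum Icc 1 (N-1) + sum Icc N n, for 1 ≤ N ≤ n
lemma st19_sum_split (f : ℕ → ℝ) {N n : ℕ} (h1 : 1 ≤ N) (h2 : N ≤ n) :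
    ∑ i ∈ Icc 1 n, f i = (∑ i ∈ Icc 1 (N - 1), f i) + ∑ i ∈ Icc N n, f i := by
  have e1 : Icc 1 n = Ioc 0 n := by rw [← Finset.Icc_add_one_left_eq_Ioc]; rfl
  have e2 : Icc 1 (N-1) = Ioc 0 (N-1) := by rw [← Finset.Icc_add_one_left_eq_Ioc]; rfl
  have e3 : Icc N n = Ioc (N-1) n := by rw [← Finset.Icc_add_one_left_eq_Ioc]; congr 1; omega
  rw [e1, e2, e3]
  exact (Finset.sum_Ioc_consecutive f (Nat.zero_le (N-1)) (by omega : N - 1 ≤ n)).symm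

set_option maxHeartbeats 2000000 in
lemma st19_det (c t : ℕ → ℝ) (a m A B : ℝ) (hm : 0 < m) (ha : 0 ≤ a) (hA : 0 ≤ A)
    (hc : ∀ i, 0 ≤ c i)
    (hT : ∀ i : ℕ, 1 ≤ i → |t i - m * i| ≤ A * (i:ℝ) ^ ((5:ℝ)/6))
    (hG : ∀ n : ℕ, 1 ≤ n → |(∑ i ∈ Icc 1 n, c i) - a * n| ≤ A * (n:ℝ) ^ ((5:ℝ)/6))
    (hB : ∀ n : ℕ, ∑ i ∈ Icc 1 n, c i * (((i:ℝ) ^ ((13:ℝ)/12))⁻¹) ≤ B) :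
    ∃ C, ∀ n : ℕ, 2 ≤ n →
      |(∑ i ∈ Icc 1 n, c i / (t i * Real.log (t i))) - a / m * Real.log (Real.log n)| ≤ C := by
  -- step 1 : find N with all the eventual conditions
  have hmi : Tendsto (fun i : ℕ => m * (i:ℝ)) atTop atTop :=
    Tendsto.const_mul_atTop hm tendsto_natCast_atTop_atTop
  have hlogn : Tendsto (fun i : ℕ => Real.log (i:ℝ)) atTop atTop :=
    Real.tendsto_log_atTop.comp tendsto_natCast_atTop_atTop
  have he2 : ∀ᶠ i : ℕ in atTop, 1 ≤ Real.log (m * (i:ℝ)) :=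
    (Real.tendsto_log_atTop.comp hmi).eventually_ge_atTop 1
  have he3 : ∀ᶠ i : ℕ in atTop, 1 ≤ Real.log (m / 2 * (i:ℝ)) :=
    (Real.tendsto_log_atTop.comp
      (Tendsto.const_mul_atTop (by positivity) tendsto_natCast_atTop_atTop)).eventually_ge_atTop 1
  have he4 : ∀ᶠ i : ℕ in atTop, A * (i:ℝ) ^ ((5:ℝ)/6) ≤ m / 2 * i := by
    have h16 : Tendsto (fun i : ℕ => ((i:ℝ)) ^ ((1:ℝ)/6)) atTop atTop :=
      (tendsto_rpow_atTop (by norm_num)).comp tendsto_natCast_atTop_atTop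
    filter_upwards [h16.eventually_ge_atTop (2 * A / m), eventually_ge_atTop 1] with i h1 h2
    have hx : (1:ℝ) ≤ (i:ℝ) := by exact_mod_cast h2
    have hxpos : (0:ℝ) < i := by linarith
    have hA' : A ≤ m / 2 * (i:ℝ) ^ ((1:ℝ)/6) := by
      rw [div_le_iff₀ hm] at h1
      nlinarith
    calc A * (i:ℝ) ^ ((5:ℝ)/6) ≤ (m / 2 * (i:ℝ) ^ ((1:ℝ)/6)) * (i:ℝ) ^ ((5:ℝ)/6) :=
          mul_le_mul_of_nonneg_right hA' (Real.rpow_nonneg hxpos.le _)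
      _ = m / 2 * ((i:ℝ) ^ ((1:ℝ)/6) * (i:ℝ) ^ ((5:ℝ)/6)) := by ring
      _ = m / 2 * i := by
          rw [← Real.rpow_add hxpos]
          norm_num
  have he5 : ∀ᶠ i : ℕ in atTop, Real.log (2 * m) ≤ Real.log (i:ℝ) :=
    hlogn.eventually_ge_atTop _
  have he6 : ∀ᶠ i : ℕ in atTop, 2 * |Real.log m| + 1 ≤ Real.log (i:ℝ) :=
    hlogn.eventually_ge_atTop _
  obtain ⟨N, hN⟩ := (((eventually_ge_atTop 3).and (he2.and (he3.and (he4.and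
      (he5.and he6))))).and (eventually_ge_atTop 1)).exists_forall_of_atTop
  have hN3 : 3 ≤ N := (hN N le_rfl).1.1
  have hN1 : 1 ≤ N := by omega
  -- derived basic facts
  have key : ∀ i : ℕ, N ≤ i → (1:ℝ) ≤ (i:ℝ) ∧ (0:ℝ) < (i:ℝ) ∧
      1 ≤ Real.log (m * (i:ℝ)) ∧ 1 ≤ Real.log (i:ℝ) ∧
      m / 2 * (i:ℝ) ≤ t i ∧ t i ≤ 2 * m * (i:ℝ) ∧
      1 ≤ Real.log (t i) ∧ Real.log (t i) ≤ 2 * Real.log (i:ℝ) ∧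
      |t i - m * i| ≤ A * (i:ℝ) ^ ((5:ℝ)/6) ∧
      2 * |Real.log m| + 1 ≤ Real.log (i:ℝ) := by
    intro i hi
    obtain ⟨⟨h3, hlg2, hlg3, hb4, hb5, hb6⟩, -⟩ := hN i hi
    have hx : (1:ℝ) ≤ (i:ℝ) := by exact_mod_cast (by omega : 1 ≤ i)
    have hxpos : (0:ℝ) < (i:ℝ) := by linarith
    have hlgx : 1 ≤ Real.log (i:ℝ) := by
      have := abs_nonneg (Real.log m); linarith
    have hTi := hT i (by omega)
    have habs := abs_le.1 hTi
    have htlow : m / 2 * (i:ℝ) ≤ t i := by nlinarith [hb4]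
    have hthigh : t i ≤ 2 * m * (i:ℝ) := by nlinarith [hb4]
    have hmx2pos : (0:ℝ) < m / 2 * (i:ℝ) := by positivity
    have hlgtlow : 1 ≤ Real.log (t i) :=
      le_trans hlg3 (Real.log_le_log hmx2pos htlow)
    have hlgthigh : Real.log (t i) ≤ 2 * Real.log (i:ℝ) := by
      have h1 : Real.log (t i) ≤ Real.log (2 * m * (i:ℝ)) :=
        Real.log_le_log (lt_of_lt_of_le hmx2pos htlow) hthigh
      have h2 : Real.log (2 * m * (i:ℝ)) = Real.log (2 * m) + Real.log (i:ℝ) :=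
        Real.log_mul (by positivity) (ne_of_gt hxpos)
      linarith
    exact ⟨hx, hxpos, hlg2, hlgx, htlow, hthigh, hlgtlow, hlgthigh, hTi, hb6⟩
  -- Part 1 per-term bound
  have hterm1 : ∀ i : ℕ, N ≤ i →
      |(t i * Real.log (t i))⁻¹ - (m * (i:ℝ) * Real.log (m * (i:ℝ)))⁻¹| ≤
        96 * A / m ^ 2 * (((i:ℝ) ^ ((13:ℝ)/12))⁻¹) := by
    intro i hi
    obtain ⟨hx, hxpos, hlg2, hlgx, htlow, hthigh, hlgtlow, hlgthigh, hTi, -⟩ := key i hi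
    set x : ℝ := (i:ℝ) with hxdef
    have hr56 : (0:ℝ) ≤ x ^ ((5:ℝ)/6) := Real.rpow_nonneg hxpos.le _
    have hτpos : 0 < t i * Real.log (t i) := by nlinarith
    have hφpos : 0 < m * x * Real.log (m * x) := by nlinarith
    -- bound |τ - φ|
    have hlogdiff : |Real.log (t i) - Real.log (m * x)| ≤ A * x ^ ((5:ℝ)/6) / (m / 2 * x) := by
      have h := st19_abs_log_sub (w := m / 2 * x) (u := t i) (v := m * x) (by positivity) htlow (by nlinarith)
      refine h.trans ?_
      gcongr
    have habssub : |t i * Real.log (t i) - m * x * Real.log (m * x)| ≤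
        4 * A * x ^ ((5:ℝ)/6) * Real.log x := by
      have e : t i * Real.log (t i) - m * x * Real.log (m * x) =
          (t i - m * x) * Real.log (t i) + m * x * (Real.log (t i) - Real.log (m * x)) := by ring
      rw [e]
      have h1 : |(t i - m * x) * Real.log (t i)| ≤ A * x ^ ((5:ℝ)/6) * (2 * Real.log x) := by
        rw [abs_mul]
        apply mul_le_mul hTi _ (abs_nonneg _) (by positivity)
        rw [abs_of_nonneg (by linarith)]
        exact hlgthigh
      have h2 : |m * x * (Real.log (t i) - Real.log (m * x))| ≤ 2 * A * x ^ ((5:ℝ)/6) := by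
        rw [abs_mul, abs_of_nonneg (by positivity)]
        have : m * x * |Real.log (t i) - Real.log (m * x)| ≤
            m * x * (A * x ^ ((5:ℝ)/6) / (m / 2 * x)) :=
          mul_le_mul_of_nonneg_left hlogdiff (by positivity)
        refine this.trans (le_of_eq ?_)
        field_simp
      calc |(t i - m * x) * Real.log (t i) + m * x * (Real.log (t i) - Real.log (m * x))|
          ≤ |(t i - m * x) * Real.log (t i)| + |m * x * (Real.log (t i) - Real.log (m * x))| :=
            abs_add_le _ _
        _ ≤ A * x ^ ((5:ℝ)/6) * (2 * Real.log x) + 2 * A * x ^ ((5:ℝ)/6) := by linarith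
        _ ≤ 4 * A * x ^ ((5:ℝ)/6) * Real.log x := by
            nlinarith [mul_nonneg (mul_nonneg hA hr56) (by linarith : (0:ℝ) ≤ Real.log x - 1)]
    -- now the inverse difference
    have hinv : (t i * Real.log (t i))⁻¹ - (m * x * Real.log (m * x))⁻¹ =
        (m * x * Real.log (m * x) - t i * Real.log (t i)) /
          (t i * Real.log (t i) * (m * x * Real.log (m * x))) :=
      inv_sub_inv (ne_of_gt hτpos) (ne_of_gt hφpos)
    rw [hinv, abs_div, abs_of_pos (mul_pos hτpos hφpos)]
    have hnum : |m * x * Real.log (m * x) - t i * Real.log (t i)| ≤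
        48 * A * x ^ ((11:ℝ)/12) := by
      rw [abs_sub_comm]
      refine habssub.trans ?_
      have hl := st19_log_le x hx
      have e1 : x ^ ((5:ℝ)/6) * x ^ ((1:ℝ)/12) = x ^ ((11:ℝ)/12) := by
        rw [← Real.rpow_add hxpos]; norm_num
      calc 4 * A * x ^ ((5:ℝ)/6) * Real.log x ≤ 4 * A * x ^ ((5:ℝ)/6) * (12 * x ^ ((1:ℝ)/12)) := by
            apply mul_le_mul_of_nonneg_left hl (by positivity)
        _ = 48 * A * (x ^ ((5:ℝ)/6) * x ^ ((1:ℝ)/12)) := by ring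
        _ = 48 * A * x ^ ((11:ℝ)/12) := by rw [e1]
    have hden : m ^ 2 / 2 * x ^ 2 ≤ t i * Real.log (t i) * (m * x * Real.log (m * x)) := by
      have h1 : m / 2 * x * 1 ≤ t i * Real.log (t i) := by nlinarith
      have h2 : m * x * 1 ≤ m * x * Real.log (m * x) := by nlinarith
      nlinarith
    calc |m * x * Real.log (m * x) - t i * Real.log (t i)| /
        (t i * Real.log (t i) * (m * x * Real.log (m * x)))
        ≤ 48 * A * x ^ ((11:ℝ)/12) / (m ^ 2 / 2 * x ^ 2) := by
          apply div_le_div₀ (by positivity) hnum (by positivity) hden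
      _ = 96 * A / m ^ 2 * (((i:ℝ) ^ ((13:ℝ)/12))⁻¹) := by
          rw [← hxdef]
          have e4 : x ^ ((11:ℝ)/12) = (x ^ ((13:ℝ)/12))⁻¹ * x ^ (2:ℕ) := by
            rw [← Real.rpow_natCast x 2, ← Real.rpow_neg hxpos.le, ← Real.rpow_add hxpos]
            norm_num
          rw [e4]
          have hx0 : x ≠ 0 := ne_of_gt hxpos
          have hm0 : m ≠ 0 := ne_of_gt hm
          field_simp
          ring
  -- Part 2 : Abel bound
  have HP2 : ∃ C2, ∀ n : ℕ, N ≤ n →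
      |∑ i ∈ Icc N n, (c i - a) * (m * (i:ℝ) * Real.log (m * (i:ℝ)))⁻¹| ≤ C2 := by
    have hkey : ∀ i : ℕ, N ≤ i → (1:ℝ) ≤ (i:ℝ) ∧ (0:ℝ) < (i:ℝ) ∧ 1 ≤ Real.log (m * (i:ℝ)) :=
      fun i hi => ⟨(key i hi).1, (key i hi).2.1, (key i hi).2.2.1⟩
    set F : ℕ → ℝ := fun j => (∑ i ∈ Icc 1 j, c i) - a * j with hFdef
    set b : ℕ → ℝ := fun i => (m * (i:ℝ) * Real.log (m * (i:ℝ)))⁻¹ with hbdef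
    have hK7 : Summable (fun i : ℕ => (((i:ℝ)) ^ ((7:ℝ)/6))⁻¹) :=
      Real.summable_nat_rpow_inv.2 (by norm_num)
    -- per-term bound for the Abel remainder
    have hterm : ∀ i : ℕ, N ≤ i → |F i * (b i - b (i + 1))| ≤
        3 * A / m * (((i:ℝ) ^ ((7:ℝ)/6))⁻¹) := by
      intro i hi
      obtain ⟨hx, hxpos, hlg⟩ := hkey i hi
      obtain ⟨hx', hxpos', hlg'⟩ := hkey (i + 1) (by omega)
      have hcast : ((i + 1 : ℕ):ℝ) = (i:ℝ) + 1 := by push_cast; ring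
      rw [hcast] at hlg'
      set x : ℝ := (i:ℝ) with hxdef
      have hφ : 0 < m * x * Real.log (m * x) :=
        mul_pos (mul_pos hm hxpos) (by linarith)
      have hφ' : 0 < m * (x + 1) * Real.log (m * (x + 1)) :=
        mul_pos (mul_pos hm (by linarith)) (by linarith)
      have hlogd : Real.log (m * (x + 1)) - Real.log (m * x) ≤ 1 / x := by
        have h := st19_abs_log_sub (w := m * x) (u := m * (x + 1)) (v := m * x)
          (by positivity) (by nlinarith) le_rfl
        have e : |m * (x + 1) - m * x| = m := by
          rw [show m * (x + 1) - m * x = m by ring, abs_of_pos hm]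
        rw [e] at h
        have e2 : m / (m * x) = 1 / x := by field_simp
        rw [e2] at h
        exact le_trans (le_abs_self _) h
      have hlogmono : Real.log (m * x) ≤ Real.log (m * (x + 1)) :=
        Real.log_le_log (by positivity) (by nlinarith)
      have hmono : m * x * Real.log (m * x) ≤ m * (x + 1) * Real.log (m * (x + 1)) :=
        mul_le_mul (by nlinarith) hlogmono (by linarith) (by positivity)
      have hdub : m * (x + 1) * Real.log (m * (x + 1)) - m * x * Real.log (m * x) ≤
          3 * m * Real.log (m * x) := by
        have e : m * (x + 1) * Real.log (m * (x + 1)) - m * x * Real.log (m * x) =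
            m * (x + 1) * (Real.log (m * (x + 1)) - Real.log (m * x)) + m * Real.log (m * x) := by
          ring
        rw [e]
        have h1 : m * (x + 1) * (Real.log (m * (x + 1)) - Real.log (m * x)) ≤
            m * (x + 1) * (1 / x) := by
          apply mul_le_mul_of_nonneg_left hlogd (by positivity)
        have h2 : m * (x + 1) * (1 / x) ≤ 2 * m := by
          rw [mul_one_div, div_le_iff₀ hxpos]
          nlinarith
        nlinarith
      -- b i - b (i+1)
      have hbsub : b i - b (i + 1) =
          (m * (x + 1) * Real.log (m * (x + 1)) - m * x * Real.log (m * x)) /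
            (m * x * Real.log (m * x) * (m * (x + 1) * Real.log (m * (x + 1)))) := by
        rw [hbdef]
        simp only [hcast]
        exact inv_sub_inv (ne_of_gt hφ) (ne_of_gt hφ')
      have hbnonneg : 0 ≤ b i - b (i + 1) := by
        rw [hbsub]
        apply div_nonneg (by linarith) (le_of_lt (mul_pos hφ hφ'))
      have hbub : b i - b (i + 1) ≤ 3 / (m * x ^ 2) := by
        rw [hbsub]
        have hden : m * x * Real.log (m * x) * (m * x) ≤
            m * x * Real.log (m * x) * (m * (x + 1) * Real.log (m * (x + 1))) := by
          apply mul_le_mul_of_nonneg_left _ (le_of_lt hφ)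
          nlinarith
        calc (m * (x + 1) * Real.log (m * (x + 1)) - m * x * Real.log (m * x)) /
            (m * x * Real.log (m * x) * (m * (x + 1) * Real.log (m * (x + 1))))
            ≤ 3 * m * Real.log (m * x) / (m * x * Real.log (m * x) * (m * x)) := by
              apply div_le_div₀ (by positivity) hdub (by positivity) hden
          _ = 3 / (m * x ^ 2) := by
              have hL : Real.log (m * x) ≠ 0 := by nlinarith
              field_simp
      have hFi : |F i| ≤ A * x ^ ((5:ℝ)/6) := hG i (by omega)
      rw [abs_mul, abs_of_nonneg hbnonneg]
      calc |F i| * (b i - b (i + 1)) ≤ (A * x ^ ((5:ℝ)/6)) * (3 / (m * x ^ 2)) := by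
            apply mul_le_mul hFi hbub hbnonneg (by positivity)
        _ = 3 * A / m * ((x ^ ((7:ℝ)/6))⁻¹) := by
            have e : x ^ ((5:ℝ)/6) = (x ^ ((7:ℝ)/6))⁻¹ * x ^ (2:ℕ) := by
              rw [← Real.rpow_natCast x 2, ← Real.rpow_neg hxpos.le, ← Real.rpow_add hxpos]
              norm_num
            rw [e]
            have hx0 : x ≠ 0 := ne_of_gt hxpos
            have hm0 : m ≠ 0 := ne_of_gt hm
            field_simp
    -- boundary term
    have hbound : ∀ n : ℕ, N ≤ n → |F n * b n| ≤ A / m := by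
      intro n hn
      obtain ⟨hx, hxpos, hlg⟩ := hkey n hn
      set x : ℝ := (n:ℝ)
      have hφ : 0 < m * x * Real.log (m * x) :=
        mul_pos (mul_pos hm hxpos) (by linarith)
      have hb1 : b n ≤ (m * x)⁻¹ := by
        rw [hbdef]
        apply inv_anti₀ (by positivity)
        nlinarith
      have hb0 : 0 ≤ b n := le_of_lt (by rw [hbdef]; exact inv_pos.2 hφ)
      have hFn : |F n| ≤ A * x ^ ((5:ℝ)/6) := hG n (by omega)
      have hx56 : x ^ ((5:ℝ)/6) ≤ x := by
        calc x ^ ((5:ℝ)/6) ≤ x ^ ((1:ℝ)) := Real.rpow_le_rpow_of_exponent_le hx (by norm_num)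
          _ = x := Real.rpow_one x
      rw [abs_mul, abs_of_nonneg hb0]
      calc |F n| * b n ≤ (A * x) * (m * x)⁻¹ := by
            apply mul_le_mul (hFn.trans (by nlinarith)) hb1 hb0 (by positivity)
        _ = A / m := by field_simp
    refine ⟨A / m + |F (N - 1) * b N| + 3 * A / m * ∑' i : ℕ, (((i:ℝ)) ^ ((7:ℝ)/6))⁻¹,
      fun n hn => ?_⟩
    have hrw : ∑ i ∈ Icc N n, (c i - a) * b i = ∑ i ∈ Icc N n, (F i - F (i - 1)) * b i := by
      apply Finset.sum_congr rfl
      intro i hi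
      have hi1 : 1 ≤ i := le_trans hN1 (Finset.mem_Icc.1 hi).1
      congr 1
      have hs := Finset.sum_Icc_succ_top (by omega : 1 ≤ i - 1 + 1) c
      have e : i - 1 + 1 = i := by omega
      rw [e] at hs
      have hcast : ((i - 1 : ℕ):ℝ) = (i:ℝ) - 1 := by
        have : (1:ℕ) ≤ i := hi1
        push_cast [this]
        ring
      simp only [hFdef]
      rw [hs, hcast]
      ring
    rw [hrw, st19_abel F b N hN1 n hn]
    have hsum : |∑ i ∈ Icc N (n - 1), F i * (b i - b (i + 1))| ≤
        3 * A / m * ∑' i : ℕ, (((i:ℝ)) ^ ((7:ℝ)/6))⁻¹ := by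
      calc |∑ i ∈ Icc N (n - 1), F i * (b i - b (i + 1))|
          ≤ ∑ i ∈ Icc N (n - 1), |F i * (b i - b (i + 1))| := Finset.abs_sum_le_sum_abs _ _
        _ ≤ ∑ i ∈ Icc N (n - 1), 3 * A / m * (((i:ℝ) ^ ((7:ℝ)/6))⁻¹) := by
            apply Finset.sum_le_sum
            intro i hi
            exact hterm i (Finset.mem_Icc.1 hi).1
        _ = 3 * A / m * ∑ i ∈ Icc N (n - 1), (((i:ℝ) ^ ((7:ℝ)/6))⁻¹) := by
            rw [Finset.mul_sum]
        _ ≤ 3 * A / m * ∑' i : ℕ, (((i:ℝ)) ^ ((7:ℝ)/6))⁻¹ := by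
            apply mul_le_mul_of_nonneg_left _ (by positivity)
            exact Summable.sum_le_tsum _ (fun i _ => by positivity) hK7
    have h1 := hbound n hn
    calc |F n * b n - F (N - 1) * b N + ∑ i ∈ Icc N (n - 1), F i * (b i - b (i + 1))|
        ≤ |F n * b n| + |F (N - 1) * b N| + |∑ i ∈ Icc N (n - 1), F i * (b i - b (i + 1))| := by
          have t1 := abs_add_le (F n * b n - F (N - 1) * b N)
            (∑ i ∈ Icc N (n - 1), F i * (b i - b (i + 1)))
          have t2 := abs_sub (F n * b n) (F (N - 1) * b N)
          linarith
      _ ≤ A / m + |F (N - 1) * b N| + 3 * A / m * ∑' i : ℕ, (((i:ℝ)) ^ ((7:ℝ)/6))⁻¹ := by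
          linarith
  -- Part 3 : harmonic-log sum
  have HP3 : ∃ C3, ∀ n : ℕ, N + 1 ≤ n →
      |a * ∑ i ∈ Icc N n, (m * (i:ℝ) * Real.log (m * (i:ℝ)))⁻¹ -
        a / m * Real.log (Real.log (n:ℝ))| ≤ C3 := by
    have hkey : ∀ i : ℕ, N ≤ i → (1:ℝ) ≤ (i:ℝ) ∧ (0:ℝ) < (i:ℝ) ∧
        1 ≤ Real.log (m * (i:ℝ)) ∧ 2 * |Real.log m| + 1 ≤ Real.log (i:ℝ) :=
      fun i hi => ⟨(key i hi).1, (key i hi).2.1, (key i hi).2.2.1, (key i hi).2.2.2.2.2.2.2.2.2⟩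
    set β : ℕ → ℝ := fun i => ((i:ℝ) * Real.log (m * (i:ℝ)))⁻¹ with hβdef
    set FF : ℕ → ℝ := fun j => Real.log (Real.log (m * (j:ℝ))) with hFFdef
    have hβpos : ∀ i : ℕ, N ≤ i → 0 < β i := by
      intro i hi
      obtain ⟨hx, hxpos, hlg, -⟩ := hkey i hi
      exact inv_pos.2 (mul_pos hxpos (by linarith))
    have hUp : ∀ i : ℕ, N ≤ i → FF (i + 1) - FF i ≤ β i := by
      intro i hi
      obtain ⟨hx, hxpos, hlg, -⟩ := hkey i hi
      obtain ⟨-, -, hlg', -⟩ := hkey (i + 1) (by omega)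
      have hcast : ((i + 1 : ℕ):ℝ) = (i:ℝ) + 1 := by push_cast; ring
      rw [hcast] at hlg'
      set x : ℝ := (i:ℝ) with hxdef
      have hmono : Real.log (m * x) ≤ Real.log (m * (x + 1)) :=
        Real.log_le_log (by positivity) (by nlinarith)
      have hinner : Real.log (m * (x + 1)) - Real.log (m * x) ≤ 1 / x := by
        have h := st19_abs_log_sub (w := m * x) (u := m * (x + 1)) (v := m * x)
          (by positivity) (by nlinarith) le_rfl
        rw [show m * (x + 1) - m * x = m by ring, abs_of_pos hm] at h
        rw [show m / (m * x) = 1 / x by field_simp] at h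
        exact le_trans (le_abs_self _) h
      have houter : FF (i + 1) - FF i ≤
          (Real.log (m * (x + 1)) - Real.log (m * x)) / Real.log (m * x) := by
        simp only [hFFdef, hcast]
        have h := st19_abs_log_sub (w := Real.log (m * x))
          (u := Real.log (m * (x + 1))) (v := Real.log (m * x))
          (by linarith) hmono le_rfl
        rw [abs_of_nonneg (sub_nonneg.2 hmono)] at h
        exact le_trans (le_abs_self _) h
      have hthis : (Real.log (m * (x + 1)) - Real.log (m * x)) / Real.log (m * x) ≤
          (1 / x) / Real.log (m * x) := by
        gcongr
      have e : (1 / x) / Real.log (m * x) = β i := by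
        rw [hβdef]; show _ = (x * Real.log (m * x))⁻¹; field_simp
      rw [e] at hthis
      linarith
    have hLo : ∀ i : ℕ, N + 1 ≤ i → β i ≤ FF i - FF (i - 1) := by
      intro i hi
      obtain ⟨hx, hxpos, hlg, -⟩ := hkey i (by omega)
      obtain ⟨-, -, hlgm, -⟩ := hkey (i - 1) (by omega)
      have hcast : ((i - 1 : ℕ):ℝ) = (i:ℝ) - 1 := by
        have : (1:ℕ) ≤ i := by omega
        push_cast [this]; ring
      rw [hcast] at hlgm
      set x : ℝ := (i:ℝ) with hxdef
      have hx2 : (2:ℝ) ≤ x := by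
        have : (N:ℝ) + 1 ≤ (i:ℝ) := by exact_mod_cast hi
        have : (1:ℝ) ≤ (N:ℝ) := by exact_mod_cast hN1
        linarith
      have hinner : 1 / x ≤ Real.log (m * x) - Real.log (m * (x - 1)) := by
        have h := st19_log_sub_ge (x := m * (x - 1)) (y := m * x)
          (by nlinarith) (by nlinarith)
        rw [show m * x - m * (x - 1) = m by ring] at h
        rw [show m / (m * x) = 1 / x by field_simp] at h
        exact h
      have houter : (Real.log (m * x) - Real.log (m * (x - 1))) / Real.log (m * x) ≤
          FF i - FF (i - 1) := by
        simp only [hFFdef, hcast]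
        exact st19_log_sub_ge (by linarith) (Real.log_le_log (by nlinarith) (by nlinarith))
      have hstep : β i ≤ (Real.log (m * x) - Real.log (m * (x - 1))) / Real.log (m * x) := by
        have e : β i = (1 / x) / Real.log (m * x) := by rw [hβdef]; show (x * Real.log (m * x))⁻¹ = _; field_simp
        rw [e]
        gcongr
      linarith
    -- the constant
    refine ⟨a * (m * (N:ℝ) * Real.log (m * (N:ℝ)))⁻¹ +
      a * m⁻¹ * (|Real.log m| + 1 + |FF (N + 1)| + |FF N|), fun n hn => ?_⟩
    obtain ⟨hxn, hxnpos, hlgn, hlgn2⟩ := hkey n (by omega)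
    obtain ⟨-, -, hlgn1', -⟩ := hkey (n + 1) (by omega)
    have hcastn : ((n + 1 : ℕ):ℝ) = (n:ℝ) + 1 := by push_cast; ring
    rw [hcastn] at hlgn1'
    have hlogn1 : 1 ≤ Real.log (n:ℝ) := by
      have := abs_nonneg (Real.log m); linarith
    -- sandwich
    have hlow : FF (n + 1) - FF (N + 1) ≤ ∑ i ∈ Icc (N + 1) n, β i := by
      rw [← st19_telescope FF N n (by omega)]
      apply Finset.sum_le_sum
      intro i hi
      have hiN : N ≤ i := by
        have := (Finset.mem_Icc.1 hi).1; omega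
      exact hUp i hiN
    have hup : ∑ i ∈ Icc (N + 1) n, β i ≤ FF n - FF N := by
      have htel := st19_telescope (fun j => FF (j - 1)) N n (by omega)
      simp only [Nat.add_sub_cancel] at htel
      calc ∑ i ∈ Icc (N + 1) n, β i ≤ ∑ i ∈ Icc (N + 1) n, (FF i - FF (i - 1)) := by
            apply Finset.sum_le_sum
            intro i hi
            exact hLo i (Finset.mem_Icc.1 hi).1
        _ = FF n - FF N := by
            rw [htel]
    -- compare FF n and FF (n+1) with log log n
    have hFFn : |FF n - Real.log (Real.log (n:ℝ))| ≤ |Real.log m| := by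
      have h := st19_abs_log_sub (w := (1:ℝ)) (u := Real.log (m * (n:ℝ)))
        (v := Real.log (n:ℝ)) one_pos hlgn hlogn1
      rw [div_one] at h
      have e : Real.log (m * (n:ℝ)) = Real.log m + Real.log (n:ℝ) :=
        Real.log_mul (ne_of_gt hm) (ne_of_gt hxnpos)
      rw [e] at h
      simpa [hFFdef, e] using h.trans (le_of_eq (by ring_nf))
    have hFFn1 : |FF (n + 1) - Real.log (Real.log (n:ℝ))| ≤ |Real.log m| + 1 := by
      have hlogdiff : |Real.log ((n:ℝ) + 1) - Real.log (n:ℝ)| ≤ 1 := by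
        have h := st19_abs_log_sub (w := (n:ℝ)) (u := (n:ℝ) + 1) (v := (n:ℝ))
          hxnpos (by linarith) le_rfl
        rw [show ((n:ℝ) + 1 - (n:ℝ)) = 1 by ring] at h
        have : |(1:ℝ)| / (n:ℝ) ≤ 1 := by
          rw [abs_one]
          rw [div_le_one hxnpos]
          exact hxn
        exact h.trans this
      have h := st19_abs_log_sub (w := (1:ℝ)) (u := Real.log (m * ((n:ℝ) + 1)))
        (v := Real.log (n:ℝ)) one_pos hlgn1' hlogn1
      rw [div_one] at h
      have e : Real.log (m * ((n:ℝ) + 1)) = Real.log m + Real.log ((n:ℝ) + 1) :=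
        Real.log_mul (ne_of_gt hm) (by positivity)
      rw [e] at h
      have habs : |Real.log m + Real.log ((n:ℝ) + 1) - Real.log (n:ℝ)| ≤ |Real.log m| + 1 := by
        have t := abs_add_le (Real.log m) (Real.log ((n:ℝ) + 1) - Real.log (n:ℝ))
        have : Real.log m + Real.log ((n:ℝ) + 1) - Real.log (n:ℝ) =
            Real.log m + (Real.log ((n:ℝ) + 1) - Real.log (n:ℝ)) := by ring
        rw [this]
        linarith
      have e2 : FF (n + 1) = Real.log (Real.log (m * ((n:ℝ) + 1))) := by
        rw [hFFdef]; simp only [hcastn]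
      rw [e2, e]
      exact h.trans habs
    -- assemble the sandwich
    have hsand : |(∑ i ∈ Icc (N + 1) n, β i) - Real.log (Real.log (n:ℝ))| ≤
        |Real.log m| + 1 + |FF (N + 1)| + |FF N| := by
      have l1 := abs_le.1 hFFn
      have l2 := abs_le.1 hFFn1
      have l3 := abs_le.1 (le_refl |FF (N + 1)|)
      have l4 := neg_abs_le (FF (N + 1))
      have l5 := le_abs_self (FF (N + 1))
      have l6 := neg_abs_le (FF N)
      have l7 := le_abs_self (FF N)
      rw [abs_le]
      constructor
      · nlinarith [hlow]
      · nlinarith [hup]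
    -- convert b to β and conclude
    have hbβ : ∀ i : ℕ, (m * (i:ℝ) * Real.log (m * (i:ℝ)))⁻¹ = m⁻¹ * β i := by
      intro i
      rw [hβdef, mul_assoc, mul_inv]
    have hsplit : ∑ i ∈ Icc N n, (m * (i:ℝ) * Real.log (m * (i:ℝ)))⁻¹ =
        (m * (N:ℝ) * Real.log (m * (N:ℝ)))⁻¹ + m⁻¹ * ∑ i ∈ Icc (N + 1) n, β i := by
      rw [st19_sum_Icc_bot _ (by omega : N ≤ n)]
      congr 1
      rw [Finset.mul_sum]
      apply Finset.sum_congr rfl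
      intro i _
      exact hbβ i
    rw [hsplit]
    have hbN : 0 ≤ (m * (N:ℝ) * Real.log (m * (N:ℝ)))⁻¹ := by
      obtain ⟨hx, hxpos, hlg, -⟩ := hkey N le_rfl
      positivity
    have e3 : a * ((m * (N:ℝ) * Real.log (m * (N:ℝ)))⁻¹ + m⁻¹ * ∑ i ∈ Icc (N + 1) n, β i) -
        a / m * Real.log (Real.log (n:ℝ)) =
        a * (m * (N:ℝ) * Real.log (m * (N:ℝ)))⁻¹ +
        a * m⁻¹ * ((∑ i ∈ Icc (N + 1) n, β i) - Real.log (Real.log (n:ℝ))) := by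
      rw [div_eq_mul_inv]; ring
    rw [e3]
    have hterm1 : |a * (m * (N:ℝ) * Real.log (m * (N:ℝ)))⁻¹| =
        a * (m * (N:ℝ) * Real.log (m * (N:ℝ)))⁻¹ := abs_of_nonneg (mul_nonneg ha hbN)
    calc |a * (m * (N:ℝ) * Real.log (m * (N:ℝ)))⁻¹ +
        a * m⁻¹ * ((∑ i ∈ Icc (N + 1) n, β i) - Real.log (Real.log (n:ℝ)))|
        ≤ |a * (m * (N:ℝ) * Real.log (m * (N:ℝ)))⁻¹| +
          |a * m⁻¹ * ((∑ i ∈ Icc (N + 1) n, β i) - Real.log (Real.log (n:ℝ)))| := abs_add_le _ _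
      _ ≤ a * (m * (N:ℝ) * Real.log (m * (N:ℝ)))⁻¹ +
          a * m⁻¹ * (|Real.log m| + 1 + |FF (N + 1)| + |FF N|) := by
          rw [hterm1, abs_mul]
          have : |a * m⁻¹| = a * m⁻¹ := abs_of_nonneg (by positivity)
          rw [this]
          have := mul_le_mul_of_nonneg_left hsand (by positivity : (0:ℝ) ≤ a * m⁻¹)
          linarith
  -- assembly
  obtain ⟨C2, hC2⟩ := HP2
  obtain ⟨C3, hC3⟩ := HP3
  apply st19_tail
  refine ⟨N + 1, |∑ i ∈ Icc 1 (N - 1), c i / (t i * Real.log (t i))| +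
    96 * A / m ^ 2 * B + C2 + C3, fun n hn => ?_⟩
  have hNn : N ≤ n := by omega
  have hsplit := st19_sum_split (fun i => c i / (t i * Real.log (t i))) hN1 hNn
  have hdecomp : ∑ i ∈ Icc N n, c i / (t i * Real.log (t i)) =
      (∑ i ∈ Icc N n, c i * ((t i * Real.log (t i))⁻¹ - (m * (i:ℝ) * Real.log (m * (i:ℝ)))⁻¹)) +
      (∑ i ∈ Icc N n, (c i - a) * (m * (i:ℝ) * Real.log (m * (i:ℝ)))⁻¹) +
      a * ∑ i ∈ Icc N n, (m * (i:ℝ) * Real.log (m * (i:ℝ)))⁻¹ := by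
    rw [Finset.mul_sum, ← Finset.sum_add_distrib, ← Finset.sum_add_distrib]
    apply Finset.sum_congr rfl
    intro i _
    rw [div_eq_mul_inv]
    ring
  have hP1 : |∑ i ∈ Icc N n, c i * ((t i * Real.log (t i))⁻¹ -
      (m * (i:ℝ) * Real.log (m * (i:ℝ)))⁻¹)| ≤ 96 * A / m ^ 2 * B := by
    have hcoef : (0:ℝ) ≤ 96 * A / m ^ 2 := by positivity
    calc |∑ i ∈ Icc N n, c i * ((t i * Real.log (t i))⁻¹ -
        (m * (i:ℝ) * Real.log (m * (i:ℝ)))⁻¹)|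
        ≤ ∑ i ∈ Icc N n, |c i * ((t i * Real.log (t i))⁻¹ -
          (m * (i:ℝ) * Real.log (m * (i:ℝ)))⁻¹)| := Finset.abs_sum_le_sum_abs _ _
      _ ≤ ∑ i ∈ Icc N n, 96 * A / m ^ 2 * (c i * (((i:ℝ) ^ ((13:ℝ)/12))⁻¹)) := by
          apply Finset.sum_le_sum
          intro i hi
          rw [abs_mul, abs_of_nonneg (hc i)]
          have h1 := hterm1 i (Finset.mem_Icc.1 hi).1
          calc c i * |(t i * Real.log (t i))⁻¹ - (m * (i:ℝ) * Real.log (m * (i:ℝ)))⁻¹|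
              ≤ c i * (96 * A / m ^ 2 * (((i:ℝ) ^ ((13:ℝ)/12))⁻¹)) :=
                mul_le_mul_of_nonneg_left h1 (hc i)
            _ = 96 * A / m ^ 2 * (c i * (((i:ℝ) ^ ((13:ℝ)/12))⁻¹)) := by ring
      _ = 96 * A / m ^ 2 * ∑ i ∈ Icc N n, c i * (((i:ℝ) ^ ((13:ℝ)/12))⁻¹) := by
          rw [Finset.mul_sum]
      _ ≤ 96 * A / m ^ 2 * B := by
          apply mul_le_mul_of_nonneg_left _ hcoef
          calc ∑ i ∈ Icc N n, c i * (((i:ℝ) ^ ((13:ℝ)/12))⁻¹)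
              ≤ ∑ i ∈ Icc 1 n, c i * (((i:ℝ) ^ ((13:ℝ)/12))⁻¹) := by
                apply Finset.sum_le_sum_of_subset_of_nonneg
                · exact Finset.Icc_subset_Icc (by omega) le_rfl
                · intro i _ _
                  have : (0:ℝ) ≤ ((i:ℝ) ^ ((13:ℝ)/12))⁻¹ := by positivity
                  exact mul_nonneg (hc i) this
            _ ≤ B := hB n
  have h2 := hC2 n hNn
  have h3 := hC3 n hn
  rw [hsplit, hdecomp]
  have htri := abs_add_le (∑ i ∈ Icc 1 (N - 1), c i / (t i * Real.log (t i)))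
  set Q := ∑ i ∈ Icc 1 (N - 1), c i / (t i * Real.log (t i)) with hQ
  set X1 := ∑ i ∈ Icc N n, c i * ((t i * Real.log (t i))⁻¹ -
    (m * (i:ℝ) * Real.log (m * (i:ℝ)))⁻¹) with hX1
  set X2 := ∑ i ∈ Icc N n, (c i - a) * (m * (i:ℝ) * Real.log (m * (i:ℝ)))⁻¹ with hX2
  set X3 := a * ∑ i ∈ Icc N n, (m * (i:ℝ) * Real.log (m * (i:ℝ)))⁻¹ with hX3
  have : Q + (X1 + X2 + X3) - a / m * Real.log (Real.log (n:ℝ)) =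
      Q + X1 + X2 + (X3 - a / m * Real.log (Real.log (n:ℝ))) := by ring
  rw [this]
  calc |Q + X1 + X2 + (X3 - a / m * Real.log (Real.log (n:ℝ)))|
      ≤ |Q| + |X1| + |X2| + |X3 - a / m * Real.log (Real.log (n:ℝ))| := by
        have t1 := abs_add_le (Q + X1 + X2) (X3 - a / m * Real.log (Real.log (n:ℝ)))
        have t2 := abs_add_le (Q + X1) X2
        have t3 := abs_add_le Q X1
        linarith
    _ ≤ |Q| + 96 * A / m ^ 2 * B + C2 + C3 := by
        have := hP1; have := h2; have := h3; linarith


-- interpolation: deterministic part of the blocks lemma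
set_option maxHeartbeats 1000000 in
lemma st19_interp (G : ℕ → ℝ) (a : ℝ) (K : ℕ) (ha : 0 ≤ a)
    (hmono : ∀ i j : ℕ, i ≤ j → G i ≤ G j)
    (hdy : ∀ k : ℕ, K ≤ k → |G ((k+1)^2) - a * ((k+1)^2 : ℕ)| ≤ ((((k+1)^2 : ℕ)):ℝ) ^ ((5:ℝ)/6)) :
    ∃ A : ℝ, ∀ n : ℕ, 1 ≤ n → |G n - a * n| ≤ A * (n:ℝ) ^ ((5:ℝ)/6) := by
  refine ⟨(4 + 3 * a) + ∑ j ∈ range ((K+2)^2), |G j - a * j|, fun n hn => ?_⟩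
  have hsumnn : (0:ℝ) ≤ ∑ j ∈ range ((K+2)^2), |G j - a * j| :=
    Finset.sum_nonneg fun j _ => abs_nonneg _
  have hrp : (0:ℝ) ≤ (n:ℝ) ^ ((5:ℝ)/6) := Real.rpow_nonneg (Nat.cast_nonneg n) _
  have hn1 : (1:ℝ) ≤ (n:ℝ) ^ ((5:ℝ)/6) := by
    apply Real.one_le_rpow (by exact_mod_cast hn) (by norm_num)
  rcases lt_or_ge n ((K+2)^2) with hcase | hcase
  · -- small n
    have h1 : |G n - a * n| ≤ ∑ j ∈ range ((K+2)^2), |G j - a * j| :=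
      Finset.single_le_sum (f := fun j => |G j - a * (j:ℝ)|)
        (fun j _ => abs_nonneg _) (Finset.mem_range.2 hcase)
    nlinarith
  · -- large n : let k = sqrt n
    set k := Nat.sqrt n with hk
    have hk2 : k^2 ≤ n := by
      have := Nat.sqrt_le' n
      nlinarith [this]
    have hk2' : n < (k+1)^2 := by
      have := Nat.lt_succ_sqrt' n
      nlinarith [this]
    have hkK : K + 1 ≤ k := by
      by_contra h
      push_neg at h
      have : n < (K+2)^2 := by
        calc n < (k+1)^2 := hk2'
          _ ≤ (K+2)^2 := Nat.pow_le_pow_left (by omega) 2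
      omega
    have hkpos : 1 ≤ k := by omega
    -- k = (k-1)+1 with k-1 ≥ K
    have hdy1 := hdy (k-1) (by omega)
    have e1 : k - 1 + 1 = k := by omega
    rw [e1] at hdy1
    have hdy2 := hdy k (by omega)
    -- real casts
    have hkr : (1:ℝ) ≤ (k:ℝ) := by exact_mod_cast hkpos
    have hnr : (1:ℝ) ≤ (n:ℝ) := by exact_mod_cast hn
    have hck : ((k^2 : ℕ):ℝ) ≤ (n:ℝ) := by exact_mod_cast hk2
    have hck' : ((n:ℕ):ℝ) ≤ (((k+1)^2 : ℕ):ℝ) := by exact_mod_cast le_of_lt hk2'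
    have hckr : ((k:ℝ))^2 ≤ (n:ℝ) := by exact_mod_cast hk2
    have hckr' : (n:ℝ) < ((k:ℝ)+1)^2 := by exact_mod_cast hk2'
    -- monotonicity bounds
    have hup : G n - a * n ≤ |G ((k+1)^2) - a * ((k+1)^2 : ℕ)| + a * (2 * k + 1) := by
      have h1 : G n ≤ G ((k+1)^2) := hmono _ _ (le_of_lt hk2')
      have h2 : G ((k+1)^2) - a * ((k+1)^2 : ℕ) ≤ |G ((k+1)^2) - a * ((k+1)^2 : ℕ)| :=
        le_abs_self _
      have h3 : a * (((k+1)^2 : ℕ):ℝ) - a * n ≤ a * (2 * (k:ℝ) + 1) := by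
        have hd : (((k+1)^2 : ℕ):ℝ) - (n:ℝ) ≤ 2 * (k:ℝ) + 1 := by
          push_cast
          nlinarith [hckr, hckr']
        nlinarith [mul_le_mul_of_nonneg_left hd ha]
      linarith
    have hdown : -(|G (k^2) - a * (k^2 : ℕ)| + a * (2 * k + 1)) ≤ G n - a * n := by
      have h1 : G (k^2) ≤ G n := hmono _ _ hk2
      have h2 : -|G (k^2) - a * (k^2 : ℕ)| ≤ G (k^2) - a * (k^2 : ℕ) := neg_abs_le _
      have h3 : a * (n:ℝ) - a * ((k^2 : ℕ):ℝ) ≤ a * (2 * (k:ℝ) + 1) := by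
        have hd : (n:ℝ) - ((k^2:ℕ):ℝ) ≤ 2 * (k:ℝ) + 1 := by
          push_cast
          nlinarith [hckr, hckr']
        nlinarith [mul_le_mul_of_nonneg_left hd ha]
      linarith
    -- threshold bounds
    have hthr : ((((k+1)^2 : ℕ)):ℝ) ^ ((5:ℝ)/6) ≤ 4 * (n:ℝ) ^ ((5:ℝ)/6) := by
      have h4 : ((((k+1)^2 : ℕ)):ℝ) ≤ 4 * (n:ℝ) := by
        push_cast
        nlinarith [hckr, hkr]
      calc ((((k+1)^2 : ℕ)):ℝ) ^ ((5:ℝ)/6) ≤ (4 * (n:ℝ)) ^ ((5:ℝ)/6) :=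
            Real.rpow_le_rpow (Nat.cast_nonneg _) h4 (by norm_num)
        _ = (4:ℝ) ^ ((5:ℝ)/6) * (n:ℝ) ^ ((5:ℝ)/6) :=
            Real.mul_rpow (by norm_num) (Nat.cast_nonneg n)
        _ ≤ 4 * (n:ℝ) ^ ((5:ℝ)/6) := by
            have : (4:ℝ) ^ ((5:ℝ)/6) ≤ (4:ℝ) ^ ((1:ℝ)) :=
              Real.rpow_le_rpow_of_exponent_le (by norm_num) (by norm_num)
            rw [Real.rpow_one] at this
            nlinarith
    have hthr2 : ((k^2 : ℕ):ℝ) ^ ((5:ℝ)/6) ≤ 4 * (n:ℝ) ^ ((5:ℝ)/6) := by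
      have h4 : ((k^2 : ℕ):ℝ) ≤ 4 * (n:ℝ) := by
        push_cast
        nlinarith [hckr, hnr]
      calc ((k^2 : ℕ):ℝ) ^ ((5:ℝ)/6) ≤ (4 * (n:ℝ)) ^ ((5:ℝ)/6) :=
            Real.rpow_le_rpow (Nat.cast_nonneg _) h4 (by norm_num)
        _ = (4:ℝ) ^ ((5:ℝ)/6) * (n:ℝ) ^ ((5:ℝ)/6) :=
            Real.mul_rpow (by norm_num) (Nat.cast_nonneg n)
        _ ≤ 4 * (n:ℝ) ^ ((5:ℝ)/6) := by
            have : (4:ℝ) ^ ((5:ℝ)/6) ≤ (4:ℝ) ^ ((1:ℝ)) :=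
              Real.rpow_le_rpow_of_exponent_le (by norm_num) (by norm_num)
            rw [Real.rpow_one] at this
            nlinarith
    -- k ≤ n^(1/2) ≤ n^(5/6)
    have hksmall : (k:ℝ) ≤ (n:ℝ) ^ ((5:ℝ)/6) := by
      have h1 : ((k:ℝ))^2 ≤ (n:ℝ) := hckr
      have h2 : (k:ℝ) ≤ (n:ℝ) ^ ((1:ℝ)/2) := by
        rw [← Real.rpow_natCast (k:ℝ) 2] at h1
        have := Real.rpow_le_rpow (by positivity) h1 (by norm_num : (0:ℝ) ≤ (1:ℝ)/2)
        rwa [← Real.rpow_mul (by positivity), show ((2:ℕ):ℝ) * ((1:ℝ)/2) = 1 by norm_num,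
          Real.rpow_one] at this
      refine h2.trans (Real.rpow_le_rpow_of_exponent_le hnr (by norm_num))
    have ha2k : a * (2 * k + 1) ≤ 3 * a * (n:ℝ) ^ ((5:ℝ)/6) := by
      nlinarith
    rw [abs_le]
    constructor
    · have := hdown
      have h5 := hthr2
      nlinarith [abs_nonneg (G (k^2) - a * ((k^2:ℕ):ℝ))]
    · have h5 := hthr
      nlinarith [abs_nonneg (G ((k+1)^2) - a * (((k+1)^2:ℕ):ℝ))]


set_option maxHeartbeats 1000000 in
lemma st19_blocks {Ω : Type*} [MeasurableSpace Ω] (μ : Measure Ω) [IsProbabilityMeasure μ]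
    (W : ℕ → Ω → ℝ)
    (hW2 : ∀ i, MemLp (W i) 2 μ)
    (hpair : ∀ i j : ℕ, i ≠ j → IndepFun (W i) (W j) μ)
    (hvar : ∀ i, variance (W i) μ = variance (W 0) μ)
    (hmean : ∀ i, μ[W i] = μ[W 0])
    (hnn : ∀ i, ∀ᵐ ω ∂μ, 0 ≤ W i ω) :
    ∀ᵐ ω ∂μ, ∃ A : ℝ, ∀ n : ℕ, 1 ≤ n →
      |(∑ i ∈ Icc 1 n, W i ω) - μ[W 0] * n| ≤ A * (n:ℝ) ^ ((5:ℝ)/6) := by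
  set a := μ[W 0] with hadef
  set σ2 := variance (W 0) μ with hσdef
  have hσnn : 0 ≤ σ2 := variance_nonneg _ _
  have hann : 0 ≤ a := integral_nonneg_of_ae (hnn 0)
  have hint : ∀ i, Integrable (W i) μ := fun i => (hW2 i).integrable one_le_two
  have hmean' : ∀ n : ℕ, μ[∑ i ∈ Icc 1 n, W i] = a * n := by
    intro n
    have h1 : μ[∑ i ∈ Icc 1 n, W i] = ∑ i ∈ Icc 1 n, μ[W i] := by
      simp only [Finset.sum_apply]
      exact integral_finset_sum _ (fun i _ => hint i)
    rw [h1]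
    have h2 : ∀ i ∈ Icc 1 n, μ[W i] = a := fun i _ => hmean i
    rw [Finset.sum_congr rfl h2, Finset.sum_const, Nat.card_Icc]
    have e : (n + 1 - 1 : ℕ) = n := by omega
    rw [e, nsmul_eq_mul, mul_comm]
  have hvarsum : ∀ n : ℕ, variance (∑ i ∈ Icc 1 n, W i) μ = n * σ2 := by
    intro n
    rw [IndepFun.variance_sum (fun i _ => hW2 i)
      (fun i _ j _ hij => hpair i j hij)]
    have h2 : ∀ i ∈ Icc 1 n, variance (W i) μ = σ2 := fun i _ => hvar i
    rw [Finset.sum_congr rfl h2, Finset.sum_const, Nat.card_Icc]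
    have e : (n + 1 - 1 : ℕ) = n := by omega
    rw [e, nsmul_eq_mul]
  -- the bad sets
  set s : ℕ → Set Ω := fun k =>
    {ω | ((((k+1)^2 : ℕ)):ℝ) ^ ((5:ℝ)/6) ≤
      |(∑ i ∈ Icc 1 ((k+1)^2), W i) ω - μ[∑ i ∈ Icc 1 ((k+1)^2), W i]|} with hsdef
  have hmeas : ∀ k : ℕ, μ (s k) ≤ ENNReal.ofReal (σ2 * ((k:ℝ) + 1) ^ (-(4:ℝ)/3)) := by
    intro k
    have hNpos : (0:ℝ) < (((k+1)^2 : ℕ):ℝ) := by positivity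
    have hc : (0:ℝ) < ((((k+1)^2 : ℕ)):ℝ) ^ ((5:ℝ)/6) := Real.rpow_pos_of_pos hNpos _
    have hcheb := meas_ge_le_variance_div_sq (μ := μ)
      (X := ∑ i ∈ Icc 1 ((k+1)^2), W i)
      (memLp_finsetSum' (Icc 1 ((k+1)^2)) (fun i _ => hW2 i)) hc
    refine hcheb.trans ?_
    apply ENNReal.ofReal_le_ofReal
    rw [hvarsum]
    have e1 : (((((k+1)^2 : ℕ)):ℝ) ^ ((5:ℝ)/6)) ^ 2 = ((((k+1)^2 : ℕ)):ℝ) ^ ((5:ℝ)/3) := by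
      rw [← Real.rpow_natCast (((((k+1)^2 : ℕ)):ℝ) ^ ((5:ℝ)/6)) 2, ← Real.rpow_mul hNpos.le]
      norm_num
    rw [e1]
    have e2 : (((k+1)^2 : ℕ):ℝ) = ((k:ℝ) + 1) ^ (2:ℕ) := by push_cast; ring
    have hk1 : (0:ℝ) < (k:ℝ) + 1 := by positivity
    rw [e2]
    have e3 : (((k:ℝ) + 1) ^ (2:ℕ)) ^ ((5:ℝ)/3) = ((k:ℝ) + 1) ^ ((10:ℝ)/3) := by
      rw [← Real.rpow_natCast ((k:ℝ) + 1) 2, ← Real.rpow_mul hk1.le]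
      norm_num
    rw [e3]
    have e4 : (((k+1)^2 : ℕ):ℝ) * σ2 = σ2 * ((k:ℝ) + 1) ^ ((2:ℝ)) := by
      rw [Real.rpow_two]; push_cast; ring
    rw [e2] at e4
    rw [e4, mul_div_assoc]
    apply mul_le_mul_of_nonneg_left _ hσnn
    rw [← Real.rpow_sub hk1]
    apply le_of_eq
    norm_num
  have hsum : (∑' k, μ (s k)) ≠ ⊤ := by
    have hsummable : Summable (fun k : ℕ => σ2 * ((k:ℝ) + 1) ^ (-(4:ℝ)/3)) := by
      apply Summable.mul_left
      have hbase : Summable (fun k : ℕ => (((k:ℝ)) ^ ((4:ℝ)/3))⁻¹) :=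
        Real.summable_nat_rpow_inv.2 (by norm_num)
      have hshift : Summable (fun k : ℕ => ((((k+1:ℕ)):ℝ) ^ ((4:ℝ)/3))⁻¹) :=
        (summable_nat_add_iff 1).2 hbase
      apply hshift.congr
      intro k
      rw [← Real.rpow_neg (by positivity)]
      push_cast
      norm_num
    have h1 : (∑' k, μ (s k)) ≤ ∑' k : ℕ, ENNReal.ofReal (σ2 * ((k:ℝ) + 1) ^ (-(4:ℝ)/3)) :=
      ENNReal.tsum_le_tsum hmeas
    have h2 : ∑' k : ℕ, ENNReal.ofReal (σ2 * ((k:ℝ) + 1) ^ (-(4:ℝ)/3)) =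
        ENNReal.ofReal (∑' k : ℕ, σ2 * ((k:ℝ) + 1) ^ (-(4:ℝ)/3)) :=
      (ENNReal.ofReal_tsum_of_nonneg (fun k => by positivity) hsummable).symm
    rw [h2] at h1
    exact ne_top_of_le_ne_top ENNReal.ofReal_ne_top h1
  have hBC := MeasureTheory.ae_eventually_notMem hsum
  have hnnall : ∀ᵐ ω ∂μ, ∀ i, 0 ≤ W i ω := ae_all_iff.2 hnn
  filter_upwards [hBC, hnnall] with ω hω hpos
  obtain ⟨K, hK⟩ := eventually_atTop.1 hω
  set G : ℕ → ℝ := fun n => ∑ i ∈ Icc 1 n, W i ω with hGdef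
  have hmono : ∀ i j : ℕ, i ≤ j → G i ≤ G j := by
    intro i j hij
    apply Finset.sum_le_sum_of_subset_of_nonneg (Finset.Icc_subset_Icc le_rfl hij)
    intro l _ _
    exact hpos l
  have hdy : ∀ k : ℕ, K ≤ k →
      |G ((k+1)^2) - a * ((k+1)^2 : ℕ)| ≤ ((((k+1)^2 : ℕ)):ℝ) ^ ((5:ℝ)/6) := by
    intro k hk
    have h1 := hK k hk
    rw [hsdef] at h1
    simp only [Set.mem_setOf_eq, not_le] at h1
    have e1 : (∑ i ∈ Icc 1 ((k+1)^2), W i) ω = G ((k+1)^2) := by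
      rw [hGdef]; simp [Finset.sum_apply]
    have e2 : μ[∑ i ∈ Icc 1 ((k+1)^2), W i] = a * ((k+1)^2 : ℕ) := hmean' _
    rw [e1, e2] at h1
    exact le_of_lt h1
  obtain ⟨A, hA⟩ := st19_interp G a K hann hmono hdy
  exact ⟨A, fun n hn => hA n hn⟩


lemma st19_sumfin {Ω : Type*} [MeasurableSpace Ω] (μ : Measure Ω) [IsProbabilityMeasure μ]
    (Y : ℕ → Ω → ℝ) (hmeas : ∀ i, Measurable (Y i)) (hnn : ∀ i ω, 0 ≤ Y i ω)
    (hident : ∀ i, IdentDistrib (Y i) (Y 0) μ μ) (hint : Integrable (Y 0) μ) :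
    ∀ᵐ ω ∂μ, Summable (fun i : ℕ => Y i ω * (((i:ℝ) ^ ((13:ℝ)/12))⁻¹)) := by
  set w : ℕ → ℝ := fun i => ((i:ℝ) ^ ((13:ℝ)/12))⁻¹ with hwdef
  have hwnn : ∀ i, 0 ≤ w i := fun i => by positivity
  have hw : Summable w := Real.summable_nat_rpow_inv.2 (by norm_num)
  set h : ℕ → Ω → ℝ≥0∞ := fun i ω => ENNReal.ofReal (Y i ω) * ENNReal.ofReal (w i) with hhdef
  have hhmeas : ∀ i, Measurable (h i) := fun i =>
    ((hmeas i).ennreal_ofReal).mul_const _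
  have hI : ∫⁻ ω, ENNReal.ofReal (Y 0 ω) ∂μ < ⊤ := hint.lintegral_lt_top
  have hIi : ∀ i, ∫⁻ ω, ENNReal.ofReal (Y i ω) ∂μ = ∫⁻ ω, ENNReal.ofReal (Y 0 ω) ∂μ :=
    fun i => ((hident i).comp ENNReal.measurable_ofReal).lintegral_eq
  have htot : ∫⁻ ω, (∑' i, h i ω) ∂μ ≠ ⊤ := by
    rw [lintegral_tsum (fun i => (hhmeas i).aemeasurable)]
    have e1 : ∀ i, ∫⁻ ω, h i ω ∂μ =
        (∫⁻ ω, ENNReal.ofReal (Y 0 ω) ∂μ) * ENNReal.ofReal (w i) := by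
      intro i
      rw [hhdef]
      simp only
      rw [lintegral_mul_const _ ((hmeas i).ennreal_ofReal), hIi i]
    rw [tsum_congr e1, ENNReal.tsum_mul_left]
    apply ENNReal.mul_ne_top hI.ne
    rw [← ENNReal.ofReal_tsum_of_nonneg hwnn hw]
    exact ENNReal.ofReal_ne_top
  have hae := ae_lt_top' (AEMeasurable.ennreal_tsum (fun i => (hhmeas i).aemeasurable)) htot
  filter_upwards [hae] with ω hω
  have hsum : Summable (fun i => (h i ω).toReal) := ENNReal.summable_toReal hω.ne
  apply hsum.congr
  intro i
  rw [hhdef]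
  simp only
  rw [ENNReal.toReal_mul, ENNReal.toReal_ofReal (hnn i ω), ENNReal.toReal_ofReal (hwnn i)]


theorem stmt_19 {Ω : Type*} [MeasurableSpace Ω] (μ : Measure Ω) [IsProbabilityMeasure μ]
    (L : ℕ → Ω → ℝ) (g : ℝ → ℝ) (m : ℝ)
    (hmeas : ∀ n, Measurable (L n))
    (hindep : iIndepFun L μ)
    (hident : ∀ n, IdentDistrib (L n) (L 0) μ μ)
    (hpos : ∀ n, ∀ᵐ ω ∂μ, 0 < L n ω)
    (hL2 : MemLp (L 0) 2 μ)
    (hmean : μ[L 0] = m) (hm : 0 < m)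
    (hg : Measurable g) (hgnonneg : ∀ x, 0 ≤ g x)
    (hgL2 : MemLp (fun ω => g (L 0 ω)) 2 μ) :
    ∀ᵐ ω ∂μ, ∃ C : ℝ, ∀ n : ℕ, 2 ≤ n →
      |(∑ i ∈ Finset.Icc 1 n,
          g (L (i + 1) ω) /
            ((∑ j ∈ Finset.Icc 1 i, L j ω) * Real.log (∑ j ∈ Finset.Icc 1 i, L j ω))) -
        ((μ[fun ω' => g (L 0 ω')]) / m) * Real.log (Real.log n)| ≤ C := by
  -- blocks for L itself
  have hWL2 : ∀ i, MemLp (L i) 2 μ := fun i => (hident i).symm.memLp_snd hL2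
  have hAE1 := st19_blocks μ L hWL2 (fun i j hij => hindep.indepFun hij)
    (fun i => (hident i).variance_eq) (fun i => (hident i).integral_eq)
    (fun i => (hpos i).mono (fun ω h => le_of_lt h))
  -- blocks for g ∘ L (· + 1)
  set W : ℕ → Ω → ℝ := fun i ω => g (L (i + 1) ω) with hWdef
  have idD : ∀ i, IdentDistrib (W i) (fun ω => g (L 0 ω)) μ μ :=
    fun i => (hident (i + 1)).comp hg
  have hW2 : ∀ i, MemLp (W i) 2 μ := fun i => (idD i).symm.memLp_snd hgL2
  have hWpair : ∀ i j : ℕ, i ≠ j → IndepFun (W i) (W j) μ := by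
    intro i j hij
    exact (hindep.indepFun (by omega : i + 1 ≠ j + 1)).comp hg hg
  have hWvar : ∀ i, variance (W i) μ = variance (W 0) μ :=
    fun i => ((idD i).trans (idD 0).symm).variance_eq
  have hWmean : ∀ i, μ[W i] = μ[W 0] :=
    fun i => ((idD i).trans (idD 0).symm).integral_eq
  have hWnn : ∀ i, ∀ᵐ ω ∂μ, 0 ≤ W i ω :=
    fun i => Filter.Eventually.of_forall (fun ω => hgnonneg _)
  have hAE2 := st19_blocks μ W hW2 hWpair hWvar hWmean hWnn
  -- summability lemma
  have hYint : Integrable (W 0) μ := ((idD 0).symm.memLp_snd hgL2).integrable one_le_two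
  have hAE3 := st19_sumfin μ W (fun i => hg.comp (hmeas (i + 1)))
    (fun i ω => hgnonneg _) (fun i => (idD i).trans (idD 0).symm) hYint
  -- mean identifications
  set aG := μ[fun ω' => g (L 0 ω')] with haGdef
  have haG : μ[W 0] = aG := (idD 0).integral_eq
  have haGnn : 0 ≤ aG := by
    rw [haGdef]
    exact integral_nonneg (fun ω => hgnonneg _)
  rw [hmean] at hAE1
  rw [haG] at hAE2
  filter_upwards [hAE1, hAE2, hAE3] with ω h1 h2 h3
  obtain ⟨A1, hA1⟩ := h1
  obtain ⟨A2, hA2⟩ := h2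
  -- A1, A2 are nonnegative (test at n = 1)
  have hA1nn : 0 ≤ A1 := by
    have := hA1 1 le_rfl
    have h11 : ((1:ℕ):ℝ) ^ ((5:ℝ)/6) = 1 := by
      norm_num
    rw [h11, mul_one] at this
    exact le_trans (abs_nonneg _) this
  have hA2nn : 0 ≤ A2 := by
    have := hA2 1 le_rfl
    have h11 : ((1:ℕ):ℝ) ^ ((5:ℝ)/6) = 1 := by norm_num
    rw [h11, mul_one] at this
    exact le_trans (abs_nonneg _) this
  set A := max A1 A2 with hAdef
  have hAnn : 0 ≤ A := le_trans hA1nn (le_max_left _ _)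
  have hT : ∀ i : ℕ, 1 ≤ i →
      |(∑ j ∈ Icc 1 i, L j ω) - m * i| ≤ A * (i:ℝ) ^ ((5:ℝ)/6) := by
    intro i hi
    refine (hA1 i hi).trans ?_
    apply mul_le_mul_of_nonneg_right (le_max_left _ _) (by positivity)
  have hG : ∀ n : ℕ, 1 ≤ n →
      |(∑ i ∈ Icc 1 n, g (L (i + 1) ω)) - aG * n| ≤ A * (n:ℝ) ^ ((5:ℝ)/6) := by
    intro n hn
    refine (hA2 n hn).trans ?_
    apply mul_le_mul_of_nonneg_right (le_max_right _ _) (by positivity)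
  have hB : ∀ n : ℕ, ∑ i ∈ Icc 1 n, g (L (i + 1) ω) * (((i:ℝ) ^ ((13:ℝ)/12))⁻¹) ≤
      ∑' i : ℕ, g (L (i + 1) ω) * (((i:ℝ) ^ ((13:ℝ)/12))⁻¹) := by
    intro n
    apply Summable.sum_le_tsum _ (fun i _ => mul_nonneg (hgnonneg _) (by positivity)) h3
  exact st19_det (fun i => g (L (i + 1) ω)) (fun i => ∑ j ∈ Icc 1 i, L j ω) aG m A
    (∑' i : ℕ, g (L (i + 1) ω) * (((i:ℝ) ^ ((13:ℝ)/12))⁻¹)) hm haGnn hAnn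
    (fun i => hgnonneg _) hT hG hB
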